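/- Let f : ℕ → ℂ be multiplicative with |f(n)| ≤ 1 and M_p(f) = (1 − 1/p) ∑_{k ≥ 0} f(p^k)/p^k for a prime p. Then M_p(f) = 0 if and only if p = 2 and f(2^k) = −1 for all k ≥ 1. -/

import Mathlib

set_option maxHeartbeats 1000000 in
/-- `M_p(f) = (1 - 1/p) ∑_{k≥0} f(p^k)/p^k` vanishes iff `p = 2` and `f(2^k) = -1`
for all `k ≥ 1`. -/
theorem local_mean_value_eq_zero_iff
    (f : ℕ → ℂ) (hf1 : f 1 = 1)
    (hfmul : ∀ m n, Nat.Coprime m n → f (m * n) = f m * f n)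
    (hfb : ∀ n, ‖f n‖ ≤ 1)
    (p : ℕ) (hp : p.Prime) :
    (1 - 1 / (p : ℂ)) * ∑' k : ℕ, f (p ^ k) / (p : ℂ) ^ k = 0 ↔
      p = 2 ∧ ∀ k : ℕ, 1 ≤ k → f (2 ^ k) = -1 := by
  have hp2 : 2 ≤ p := hp.two_le
  have hpR : (2:ℝ) ≤ (p:ℝ) := by exact_mod_cast hp2
  have hpR0 : (0:ℝ) < (p:ℝ) := by linarith
  have hpC0 : (p:ℂ) ≠ 0 := Nat.cast_ne_zero.mpr hp.pos.ne'
  have hfac : (1 - 1 / (p : ℂ)) ≠ 0 := by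
    rw [sub_ne_zero]
    intro h
    rw [eq_div_iff hpC0, one_mul] at h
    have : p = 1 := by exact_mod_cast h
    omega
  have hnorm : ∀ k : ℕ, ‖f (p ^ k) / (p:ℂ) ^ k‖ ≤ (1 / (p:ℝ)) ^ k := by
    intro k
    rw [norm_div, norm_pow, Complex.norm_natCast, div_pow, one_pow]
    gcongr
    exact hfb (p ^ k)
  have hgeo : ‖(1 / (p:ℝ))‖ < 1 := by
    rw [Real.norm_eq_abs, abs_of_pos (by positivity), div_lt_one hpR0]
    linarith
  have hsumgeo : Summable (fun k : ℕ => (1 / (p:ℝ)) ^ k) :=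
    summable_geometric_of_norm_lt_one hgeo
  have hsum : Summable (fun k : ℕ => f (p ^ k) / (p:ℂ) ^ k) :=
    Summable.of_norm_bounded hsumgeo hnorm
  have hsumtail : Summable (fun k : ℕ => f (p ^ (k+1)) / (p:ℂ) ^ (k+1)) :=
    (summable_nat_add_iff 1).2 hsum
  have hsplit : ∑' k : ℕ, f (p ^ k) / (p:ℂ) ^ k
      = 1 + ∑' k : ℕ, f (p ^ (k+1)) / (p:ℂ) ^ (k+1) := by
    rw [Summable.tsum_eq_zero_add hsum]
    simp [hf1]
  have hgeotail : ∑' k : ℕ, (1 / (p:ℝ)) ^ (k+1) = 1 / ((p:ℝ) - 1) := by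
    have hg := tsum_geometric_of_norm_lt_one hgeo
    calc ∑' k : ℕ, (1 / (p:ℝ)) ^ (k+1)
        = (1/(p:ℝ)) * ∑' k : ℕ, (1 / (p:ℝ)) ^ k := by
          rw [← tsum_mul_left]; congr 1; ext k; ring
      _ = (1/(p:ℝ)) * (1 - 1/(p:ℝ))⁻¹ := by rw [hg]
      _ = 1 / ((p:ℝ) - 1) := by field_simp
  constructor
  · intro h0
    have hS : ∑' k : ℕ, f (p ^ k) / (p:ℂ) ^ k = 0 :=
      (mul_eq_zero.1 h0).resolve_left hfac
    have hT : ∑' k : ℕ, f (p ^ (k+1)) / (p:ℂ) ^ (k+1) = -1 := by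
      rw [hsplit] at hS; linear_combination hS
    have hsumnorm : Summable (fun k : ℕ => ‖f (p ^ (k+1)) / (p:ℂ) ^ (k+1)‖) :=
      Summable.of_nonneg_of_le (fun _ => norm_nonneg _) (fun k => hnorm (k+1))
        ((summable_nat_add_iff 1).2 hsumgeo)
    have hTnorm : ‖∑' k : ℕ, f (p ^ (k+1)) / (p:ℂ) ^ (k+1)‖ ≤ 1 / ((p:ℝ) - 1) := by
      calc ‖∑' k : ℕ, f (p ^ (k+1)) / (p:ℂ) ^ (k+1)‖
          ≤ ∑' k : ℕ, ‖f (p ^ (k+1)) / (p:ℂ) ^ (k+1)‖ :=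
            norm_tsum_le_tsum_norm hsumnorm
        _ ≤ ∑' k : ℕ, (1 / (p:ℝ)) ^ (k+1) :=
            Summable.tsum_le_tsum (fun k => hnorm (k+1)) hsumnorm
              ((summable_nat_add_iff 1).2 hsumgeo)
        _ = 1 / ((p:ℝ) - 1) := hgeotail
    have hp_eq : p = 2 := by
      by_contra hne
      have hp3 : 3 ≤ p := by omega
      have hp3R : (3:ℝ) ≤ (p:ℝ) := by exact_mod_cast hp3
      rw [hT] at hTnorm
      simp only [norm_neg, norm_one] at hTnorm
      have h12 : 1 / ((p:ℝ) - 1) ≤ 1/2 := by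
        rw [div_le_div_iff₀ (by linarith) (by norm_num)]; linarith
      linarith
    subst hp_eq
    refine ⟨rfl, ?_⟩
    set g : ℕ → ℂ := fun k => f (2 ^ (k+1)) / ((2:ℕ):ℂ) ^ (k+1) with hg
    have hgsum : Summable g := hsumtail
    have hgT : ∑' k, g k = -1 := hT
    have hgnorm : ∀ k, ‖g k‖ ≤ (1/(2:ℝ)) ^ (k+1) := by
      intro k
      simp only [hg]
      simpa using hnorm (k+1)
    set u : ℕ → ℝ := fun k => (g k).re + (1/(2:ℝ)) ^ (k+1) with hu
    have hsumre : Summable (fun k => (g k).re) :=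
      (Complex.hasSum_re hgsum.hasSum).summable
    have hsumhalf : Summable (fun k : ℕ => (1/(2:ℝ)) ^ (k+1)) :=
      (summable_nat_add_iff 1).2 (summable_geometric_of_norm_lt_one (by norm_num))
    have husum : Summable u := hsumre.add hsumhalf
    have hunn : ∀ k, 0 ≤ u k := by
      intro k
      have h1 : |(g k).re| ≤ (1/(2:ℝ)) ^ (k+1) :=
        le_trans (Complex.abs_re_le_norm _) (hgnorm k)
      have := (abs_le.1 h1).1
      simp only [hu]
      linarith
    have hh : ∑' k : ℕ, (1/(2:ℝ)) ^ (k+1) = 1 := by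
      have h2 : ∑' k : ℕ, (1/(2:ℝ)) ^ k = 2 := by
        rw [tsum_geometric_of_norm_lt_one (by norm_num)]; norm_num
      calc ∑' k : ℕ, (1/(2:ℝ)) ^ (k+1)
          = (1/2) * ∑' k : ℕ, (1/(2:ℝ)) ^ k := by
            rw [← tsum_mul_left]; congr 1; ext k; ring
        _ = 1 := by rw [h2]; norm_num
    have hutsum : ∑' k, u k = 0 := by
      have hre : ∑' k, (g k).re = -1 := by
        have h := Complex.re_tsum hgsum
        rw [hgT] at h
        simpa using h.symm
      rw [Summable.tsum_add hsumre hsumhalf, hre, hh]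
      ring
    have huzero : ∀ k, u k = 0 := by
      intro k
      have hle : u k ≤ ∑' k, u k := Summable.le_tsum husum k (fun j _ => hunn j)
      have := hunn k
      rw [hutsum] at hle
      linarith
    have hgval : ∀ k, g k = ((-((1/(2:ℝ)) ^ (k+1)) : ℝ) : ℂ) := by
      intro k
      have hre : (g k).re = -(1/(2:ℝ)) ^ (k+1) := by
        have := huzero k; simp only [hu] at this; linarith
      have him : (g k).im = 0 := by
        have h1 : ‖g k‖ ≤ (1/(2:ℝ)) ^ (k+1) := hgnorm k
        have h2 : (g k).re ^ 2 + (g k).im ^ 2 = ‖g k‖ ^ 2 := by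
          rw [Complex.sq_norm, Complex.normSq_apply]
          ring
        nlinarith [norm_nonneg (g k), sq_nonneg ((g k).im)]
      rw [← hre, Complex.ext_iff]
      refine ⟨(Complex.ofReal_re _).symm, ?_⟩
      rw [him, Complex.ofReal_im]
    intro k hk
    obtain ⟨j, rfl⟩ : ∃ j, k = j + 1 := ⟨k - 1, by omega⟩
    have hv := hgval j
    simp only [hg] at hv
    have h2pow : (((2:ℕ):ℂ) ^ (j+1)) ≠ 0 := pow_ne_zero _ (by norm_num)
    rw [div_eq_iff h2pow] at hv
    rw [hv]
    push_cast
    rw [neg_mul, ← mul_pow]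
    norm_num
  · rintro ⟨rfl, hval⟩
    have hT : ∑' k : ℕ, f (2 ^ (k+1)) / ((2:ℕ):ℂ) ^ (k+1) = -1 := by
      have heach : ∀ k : ℕ, f (2 ^ (k+1)) / ((2:ℕ):ℂ) ^ (k+1)
          = -(1/(2:ℂ)) ^ (k+1) := by
        intro k
        rw [hval (k+1) (by omega)]
        push_cast
        rw [neg_div, one_div_pow]
      calc ∑' k : ℕ, f (2 ^ (k+1)) / ((2:ℕ):ℂ) ^ (k+1)
          = ∑' k : ℕ, -(1/(2:ℂ)) ^ (k+1) := tsum_congr heach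
        _ = -((1/(2:ℂ)) * ∑' k : ℕ, (1/(2:ℂ)) ^ k) := by
            rw [← tsum_mul_left, ← tsum_neg]
            congr 1; ext k; ring
        _ = -1 := by
            rw [tsum_geometric_of_norm_lt_one (by norm_num)]
            norm_num
    rw [hsplit, hT]
    ring
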